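/- For n ≥ 1 and even q ≥ 4, the maximum size of a length-n code over Z_q correcting any number of reverse-complement duplications of length 1 is q·((q−2)^n − 1)/(q−3), and hence the coding capacity equals log_q(q−2). -/

import Mathlib

/-- One reverse-complement duplication of length `k`: a `k`-factor `v` of `x`
gets a reverse-complement copy inserted right after it. -/
def RCStep {q : ℕ} (bar : ZMod q → ZMod q) (k : ℕ) (x y : List (ZMod q)) : Prop :=
  ∃ u v w : List (ZMod q), v.length = k ∧ x = u ++ v ++ w ∧
    y = u ++ v ++ (v.map bar).reverse ++ w

/-- Finitely many (possibly zero) reverse-complement duplications of length `k`. -/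
def RCDerives {q : ℕ} (bar : ZMod q → ZMod q) (k : ℕ) :
    List (ZMod q) → List (ZMod q) → Prop :=
  Relation.ReflTransGen (RCStep bar k)

/-- `C` is a length-`n` code correcting any number of length-`k`
reverse-complement duplications: distinct codewords have disjoint descendant cones. -/
def IsRCCode {q : ℕ} (bar : ZMod q → ZMod q) (k n : ℕ) (C : Finset (List (ZMod q))) : Prop :=
  (∀ c ∈ C, c.length = n) ∧
    ∀ c ∈ C, ∀ c' ∈ C, c ≠ c' →
      ∀ z, RCDerives bar k c z → ¬ RCDerives bar k c' z

/-- The maximal size of such a code. -/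
noncomputable def maxRCCode {q : ℕ} (bar : ZMod q → ZMod q) (k n : ℕ) : ℕ :=
  sSup {M : ℕ | ∃ C : Finset (List (ZMod q)), IsRCCode bar k n C ∧ C.card = M}


section Dev
variable {α : Type*} [DecidableEq α] (bar : α → α)

/-- Alternating word a, bar a, a, ... of length m. -/
def altW : α → ℕ → List α
  | _, 0 => []
  | a, (m+1) => a :: altW (bar a) m

/-- Signature: leading letters of maximal {a, bar a}-blocks. -/
def sigW : List α → List α
  | [] => []
  | a :: l => a :: sigW (l.dropWhile (fun c => c = a ∨ c = bar a))
termination_by l => l.length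
decreasing_by simp_wf; exact ((List.dropWhile_sublist _).length_le)

lemma sigW_nil : sigW bar ([] : List α) = [] := by rw [sigW.eq_1]

lemma sigW_cons (a : α) (l : List α) :
    sigW bar (a :: l) = a :: sigW bar (l.dropWhile (fun c => c = a ∨ c = bar a)) := by
  rw [sigW.eq_2]

lemma dropWhile_append_of_all {p : α → Bool} {l₁ : List α} (h : ∀ x ∈ l₁, p x) (l₂ : List α) :
    (l₁ ++ l₂).dropWhile p = l₂.dropWhile p := by
  induction l₁ with
  | nil => simp
  | cons a t ih =>
      simp only [List.cons_append, List.dropWhile_cons]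
      rw [h a (by simp)]
      exact ih (fun x hx => h x (by simp [hx]))

end Dev

section Dev2
set_option linter.unusedSectionVars false
variable {α : Type*} [DecidableEq α] (bar : α → α)

lemma not_of_dropWhile_cons {p : α → Bool} {l : List α} : ∀ {c r}, l.dropWhile p = c :: r → p c = false := by
  induction l with
  | nil => intro c r h; simp at h
  | cons a t ih =>
      intro c r h
      rw [List.dropWhile_cons] at h
      split at h
      · exact ih h
      · cases h; simp_all

lemma sigW_insert_nil (hinv : Function.Involutive bar) (v : α) (w : List α) :
    sigW bar (v :: bar v :: w) = sigW bar (v :: w) := by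
  rw [sigW_cons, sigW_cons]
  congr 1
  rw [List.dropWhile_cons]
  simp

lemma sigW_insert (hinv : Function.Involutive bar) (v : α) (u w : List α) :
    sigW bar (u ++ v :: bar v :: w) = sigW bar (u ++ v :: w) := by
  suffices H : ∀ n (u : List α), u.length ≤ n →
      sigW bar (u ++ v :: bar v :: w) = sigW bar (u ++ v :: w) from H u.length u le_rfl
  intro n
  induction n with
  | zero =>
      intro u hu
      have : u = [] := List.length_eq_zero_iff.mp (Nat.le_zero.mp hu)
      subst this
      simpa using sigW_insert_nil bar hinv v w
  | succ n ih =>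
      intro u hu
      match u with
      | [] => simpa using sigW_insert_nil bar hinv v w
      | a :: u' =>
        simp only [List.cons_append, sigW_cons]
        set p : α → Bool := fun c => decide (c = a ∨ c = bar a) with hp
        cases hdw : u'.dropWhile p with
        | nil =>
            have hall : ∀ x ∈ u', p x := List.dropWhile_eq_nil_iff.mp hdw
            rw [dropWhile_append_of_all hall, dropWhile_append_of_all hall]
            by_cases hv : (v = a ∨ v = bar a)
            · have hv' : (bar v = a ∨ bar v = bar a) := by
                rcases hv with h | h
                · exact Or.inr (by rw [h])
                · exact Or.inl (by rw [h, hinv a])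
              have hpv : p v = true := by simp [hp]; exact hv
              have hpv' : p (bar v) = true := by simp [hp]; exact hv'
              simp only [List.dropWhile_cons, hpv, hpv', if_true]
            · have hpv : p v = false := by simp only [hp, decide_eq_false_iff_not]; exact hv
              simp only [List.dropWhile_cons, hpv, Bool.false_eq_true, if_false]
              rw [sigW_insert_nil bar hinv v w]
        | cons c r =>
            have hu' : u' = u'.takeWhile p ++ c :: r := by
              rw [← hdw, List.takeWhile_append_dropWhile]
            have hall : ∀ x ∈ u'.takeWhile p, p x := fun x hx => List.mem_takeWhile_imp hx
            have hc : p c = false := not_of_dropWhile_cons hdw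
            have hdrop : ∀ X : List α, (u' ++ X).dropWhile p = c :: (r ++ X) := by
              intro X
              rw [hu']
              rw [List.append_assoc, List.cons_append,
                dropWhile_append_of_all hall, List.dropWhile_cons, hc]
              simp
            rw [hdrop, hdrop]
            have hlen : (c :: r).length ≤ n := by
              calc (c :: r).length = (u'.dropWhile p).length := by rw [hdw]
                _ ≤ u'.length := (List.dropWhile_sublist _).length_le
                _ ≤ n := by simpa using Nat.lt_succ_iff.mp (Nat.lt_of_lt_of_le (Nat.lt_succ_self _) hu)
            have := ih (c :: r) hlen
            simpa using this
end Dev2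

section Dev3
variable {q : ℕ} (bar : ZMod q → ZMod q)

lemma rcstep1_iff {x y : List (ZMod q)} :
    RCStep bar 1 x y ↔ ∃ (u : List (ZMod q)) (c : ZMod q) (w : List (ZMod q)),
      x = u ++ c :: w ∧ y = u ++ c :: bar c :: w := by
  constructor
  · rintro ⟨u, v, w, hv, hx, hy⟩
    obtain ⟨c, rfl⟩ : ∃ c, v = [c] := by
      match v, hv with
      | [c], _ => exact ⟨c, rfl⟩
    exact ⟨u, c, w, by simpa using hx, by simpa using hy⟩
  · rintro ⟨u, c, w, hx, hy⟩
    exact ⟨u, [c], w, rfl, by simpa using hx, by simpa using hy⟩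

lemma rcstep1_mk (u : List (ZMod q)) (c : ZMod q) (w : List (ZMod q)) :
    RCStep bar 1 (u ++ c :: w) (u ++ c :: bar c :: w) :=
  (rcstep1_iff bar).mpr ⟨u, c, w, rfl, rfl⟩

lemma RCStep.context {k : ℕ} {x y : List (ZMod q)} (h : RCStep bar k x y)
    (u w : List (ZMod q)) : RCStep bar k (u ++ x ++ w) (u ++ y ++ w) := by
  obtain ⟨u', v, w', hv, rfl, rfl⟩ := h
  exact ⟨u ++ u', v, w' ++ w, hv, by simp, by simp⟩

lemma RCDerives.context {k : ℕ} {x y : List (ZMod q)} (h : RCDerives bar k x y)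
    (u w : List (ZMod q)) : RCDerives bar k (u ++ x ++ w) (u ++ y ++ w) := by
  induction h with
  | refl => exact Relation.ReflTransGen.refl
  | tail _ hs ih => exact Relation.ReflTransGen.tail ih (hs.context bar u w)

lemma RCDerives.context_cons {k : ℕ} {x y : List (ZMod q)} (h : RCDerives bar k x y)
    (a : ZMod q) : RCDerives bar k (a :: x) (a :: y) := by
  simpa using h.context bar [a] []

lemma sigW_of_rcderives (hinv : Function.Involutive bar) {x y : List (ZMod q)}
    (h : RCDerives bar 1 x y) : sigW bar y = sigW bar x := by
  induction h with
  | refl => rfl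
  | tail _ hs ih =>
      obtain ⟨u, c, w, rfl, rfl⟩ := (rcstep1_iff bar).mp hs
      rw [← ih]
      exact sigW_insert bar hinv c u w

lemma altW_succ (a : ZMod q) (m : ℕ) : altW bar a (m + 1) = a :: altW bar (bar a) m := rfl

lemma altW_snoc (hinv : Function.Involutive bar) :
    ∀ (m : ℕ) (a : ZMod q), 1 ≤ m →
      ∃ u c, altW bar a m = u ++ [c] ∧ altW bar a (m + 1) = u ++ [c, bar c] := by
  intro m
  induction m with
  | zero => intro a h; omega
  | succ m ih =>
      intro a _
      rcases Nat.eq_zero_or_pos m with rfl | hm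
      · exact ⟨[], a, by simp [altW], by simp [altW]⟩
      · obtain ⟨u, c, h1, h2⟩ := ih (bar a) hm
        refine ⟨a :: u, c, ?_, ?_⟩
        · rw [altW_succ, h1]; simp
        · rw [altW_succ, h2]; simp

lemma derives_altW_extend (hinv : Function.Involutive bar) {a : ZMod q} {m m' : ℕ}
    (h1 : 1 ≤ m) (h : m ≤ m') : RCDerives bar 1 (altW bar a m) (altW bar a m') := by
  induction m', h using Nat.le_induction with
  | base => exact Relation.ReflTransGen.refl
  | succ j hj ih =>
      refine Relation.ReflTransGen.tail ih ?_
      obtain ⟨u, c, hc1, hc2⟩ := altW_snoc bar hinv j a (le_trans h1 hj)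
      rw [hc1, hc2]
      simpa using rcstep1_mk bar u c []

lemma block_derives (hinv : Function.Involutive bar) :
    ∀ (l : List (ZMod q)) (a : ZMod q), (∀ c ∈ l, c = a ∨ c = bar a) →
      ∃ m, 1 ≤ m ∧ RCDerives bar 1 (a :: l) (altW bar a m) := by
  intro l
  induction l with
  | nil =>
      intro a _
      refine ⟨1, le_rfl, ?_⟩
      show RCDerives bar 1 [a] (altW bar a 1)
      simp only [altW]
      exact Relation.ReflTransGen.refl
  | cons b t ih =>
      intro a hcl
      have hb : b = a ∨ b = bar a := hcl b (by simp)
      have hcl' : ∀ c ∈ t, c = b ∨ c = bar b := by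
        intro c hc
        rcases hcl c (by simp [hc]) with h | h <;> rcases hb with hb | hb <;>
          simp [h, hb, hinv a]
      obtain ⟨m, hm, hd⟩ := ih b hcl'
      have h1 : RCDerives bar 1 (a :: b :: t) (a :: altW bar b m) := hd.context_cons bar a
      rcases hb with hb | hb
      · -- b = a : a :: altW a m → step → altW a (m+2)
        refine ⟨m + 2, by omega, ?_⟩
        subst hb
        refine Relation.ReflTransGen.tail h1 ?_
        have h2 : altW bar b (m + 2) = b :: bar b :: altW bar b m := by
          rw [altW_succ, altW_succ, hinv b]
        rw [h2]
        simpa using rcstep1_mk bar [] b (altW bar b m)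
      · -- b = bar a
        refine ⟨m + 1, by omega, ?_⟩
        subst hb
        rw [altW_succ]
        exact h1

/-- canonical descendant of a signature -/
def canonW (s : List (ZMod q)) (m : ℕ) : List (ZMod q) :=
  (s.map (fun a => altW bar a m)).flatten

lemma canonW_cons (a : ZMod q) (s : List (ZMod q)) (m : ℕ) :
    canonW bar (a :: s) m = altW bar a m ++ canonW bar s m := by
  simp [canonW]

lemma derives_canonW (hinv : Function.Involutive bar) :
    ∀ (x : List (ZMod q)), x ≠ [] →
      ∃ m₀, 1 ≤ m₀ ∧ ∀ m, m₀ ≤ m → RCDerives bar 1 x (canonW bar (sigW bar x) m) := by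
  suffices H : ∀ (n : ℕ) (x : List (ZMod q)), x.length ≤ n → x ≠ [] →
      ∃ m₀, 1 ≤ m₀ ∧ ∀ m, m₀ ≤ m → RCDerives bar 1 x (canonW bar (sigW bar x) m) from
    fun x => H x.length x le_rfl
  intro n
  induction n with
  | zero =>
      intro x hx hne
      exact absurd (List.length_eq_zero_iff.mp (Nat.le_zero.mp hx)) hne
  | succ n ih =>
      rintro (_ | ⟨a, l⟩) hx hne
      · exact absurd rfl hne
      set p : ZMod q → Bool := fun c => decide (c = a ∨ c = bar a) with hp
      have hsplit : a :: l = (a :: l.takeWhile p) ++ l.dropWhile p := by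
        simp [List.takeWhile_append_dropWhile]
      have hblock : ∀ c ∈ l.takeWhile p, c = a ∨ c = bar a := by
        intro c hc
        have := List.mem_takeWhile_imp hc
        simpa [hp] using this
      obtain ⟨m₁, hm₁, hd₁⟩ := block_derives bar hinv (l.takeWhile p) a hblock
      have hd₁' : ∀ m, m₁ ≤ m → RCDerives bar 1 (a :: l.takeWhile p) (altW bar a m) :=
        fun m hm => hd₁.trans (derives_altW_extend bar hinv hm₁ hm)
      rw [sigW_cons]
      cases hdw : l.dropWhile p with
      | nil =>
          refine ⟨m₁, hm₁, fun m hm => ?_⟩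
          rw [sigW_nil, canonW_cons]
          have : (a :: l) = a :: l.takeWhile p := by
            conv_lhs => rw [hsplit]
            rw [hdw]; simp
          rw [this]
          simpa [canonW] using hd₁' m hm
      | cons c r =>
          have hrl : (c :: r).length ≤ n := by
            have h1 : (l.dropWhile p).length ≤ l.length := (List.dropWhile_sublist _).length_le
            rw [hdw] at h1
            simp only [List.length_cons] at hx h1 ⊢
            omega
          obtain ⟨m₂, hm₂, hd₂⟩ := ih (c :: r) hrl (by simp)
          refine ⟨max m₁ m₂, le_trans hm₁ (le_max_left _ _), fun m hm => ?_⟩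
          rw [canonW_cons]
          have step1 : RCDerives bar 1 (a :: l) ((a :: l.takeWhile p) ++ c :: r) := by
            conv_lhs => rw [hsplit, hdw]
            exact Relation.ReflTransGen.refl
          have step2 : RCDerives bar 1 ((a :: l.takeWhile p) ++ c :: r)
              (altW bar a m ++ c :: r) := by
            simpa using (hd₁' m (le_trans (le_max_left _ _) hm)).context bar [] (c :: r)
          have step3 : RCDerives bar 1 (altW bar a m ++ c :: r)
              (altW bar a m ++ canonW bar (sigW bar (c :: r)) m) := by
            simpa using (hd₂ m (le_trans (le_max_right _ _) hm)).context bar (altW bar a m) []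
          exact (step1.trans step2).trans step3

lemma common_descendant (hinv : Function.Involutive bar) {x x' : List (ZMod q)}
    (hx : x ≠ []) (hx' : x' ≠ []) (hs : sigW bar x = sigW bar x') :
    ∃ z, RCDerives bar 1 x z ∧ RCDerives bar 1 x' z := by
  obtain ⟨m₀, _, h₀⟩ := derives_canonW bar hinv x hx
  obtain ⟨m₁, _, h₁⟩ := derives_canonW bar hinv x' hx'
  exact ⟨canonW bar (sigW bar x) (max m₀ m₁), h₀ _ (le_max_left _ _),
    hs ▸ h₁ _ (le_max_right _ _)⟩

end Dev3

section Dev4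
set_option linter.unusedSectionVars false
variable {α : Type*} [DecidableEq α] (bar : α → α)

lemma sigW_ne_nil {x : List α} (hx : x ≠ []) : sigW bar x ≠ [] := by
  cases x with
  | nil => exact absurd rfl hx
  | cons a l => rw [sigW_cons]; simp

lemma sigW_length_le (x : List α) : (sigW bar x).length ≤ x.length := by
  suffices H : ∀ n (x : List α), x.length ≤ n → (sigW bar x).length ≤ x.length from
    H x.length x le_rfl
  intro n
  induction n with
  | zero => intro x hx; interval_cases h : x.length <;> simp_all [List.length_eq_zero_iff.mp h, sigW_nil]
  | succ n ih =>
      rintro (_ | ⟨a, l⟩) hx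
      · simp [sigW_nil]
      · rw [sigW_cons]
        simp only [List.length_cons] at hx ⊢
        have h1 : (l.dropWhile (fun c => decide (c = a ∨ c = bar a))).length ≤ l.length :=
          (List.dropWhile_sublist _).length_le
        have := ih (l.dropWhile (fun c => decide (c = a ∨ c = bar a))) (by omega)
        omega

lemma sigW_chain' (x : List α) :
    List.Chain' (fun a b => b ≠ a ∧ b ≠ bar a) (sigW bar x) := by
  suffices H : ∀ n (x : List α), x.length ≤ n →
      List.Chain' (fun a b => b ≠ a ∧ b ≠ bar a) (sigW bar x) from H x.length x le_rfl
  intro n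
  induction n with
  | zero => intro x hx; simp_all [List.length_eq_zero_iff.mp (Nat.le_zero.mp hx), sigW_nil, List.Chain']
  | succ n ih =>
      rintro (_ | ⟨a, l⟩) hx
      · simp [sigW_nil, List.Chain']
      · rw [sigW_cons]
        set p : α → Bool := fun c => decide (c = a ∨ c = bar a) with hp
        have hlen : (l.dropWhile p).length ≤ n := by
          have := (List.dropWhile_sublist p (l := l)).length_le
          simp only [List.length_cons] at hx; omega
        refine List.isChain_cons.mpr ⟨?_, ih _ hlen⟩
        intro b hb
        cases hdw : l.dropWhile p with
        | nil => rw [hdw, sigW_nil] at hb; simp at hb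
        | cons c r =>
            rw [hdw, sigW_cons] at hb
            simp only [List.head?_cons, Option.mem_some_iff] at hb
            subst hb
            have := not_of_dropWhile_cons hdw
            simp only [hp, decide_eq_false_iff_not, not_or] at this
            exact this

lemma sigW_of_chain' : ∀ {s : List α},
    List.Chain' (fun a b => b ≠ a ∧ b ≠ bar a) s → sigW bar s = s := by
  intro s
  induction s with
  | nil => intro _; exact sigW_nil bar
  | cons a t ih =>
      intro hc
      obtain ⟨hhd, hct⟩ := List.isChain_cons.mp hc
      rw [sigW_cons]
      have hdw : t.dropWhile (fun c => decide (c = a ∨ c = bar a)) = t := by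
        cases t with
        | nil => simp
        | cons b r =>
            rw [List.dropWhile_cons, if_neg]
            have := hhd b (by simp)
            simp only [decide_eq_true_eq]
            tauto
      rw [hdw, ih hct]

lemma sigW_replicate_cons (k : ℕ) (a : α) (t : List α) :
    sigW bar (List.replicate k a ++ a :: t) = sigW bar (a :: t) := by
  cases k with
  | zero => simp
  | succ k =>
      rw [List.replicate_succ, List.cons_append, sigW_cons, sigW_cons]
      congr 1
      rw [dropWhile_append_of_all (by intro x hx; simp_all [List.eq_of_mem_replicate hx]),
        List.dropWhile_cons]
      simp

/-- whether `a` may precede list `t` in a signature -/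
def nextOk : α → List α → Bool
  | _, [] => true
  | a, b :: _ => decide (b ≠ a ∧ b ≠ bar a)

variable [Fintype α]

/-- the finset of valid signatures of length `m` -/
def sigF : ℕ → Finset (List α)
  | 0 => {[]}
  | (m+1) => (sigF m).biUnion
      (fun t => (Finset.univ.filter (fun a => nextOk bar a t)).image (fun a => a :: t))

lemma mem_sigF {m : ℕ} {s : List α} :
    s ∈ sigF bar m ↔ s.length = m ∧ List.Chain' (fun a b => b ≠ a ∧ b ≠ bar a) s := by
  induction m generalizing s with
  | zero =>
      simp only [sigF, Finset.mem_singleton]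
      constructor
      · rintro rfl; simp [List.Chain']
      · rintro ⟨h, -⟩; exact List.length_eq_zero_iff.mp h
  | succ m ih =>
      simp only [sigF, Finset.mem_biUnion, Finset.mem_image, Finset.mem_filter,
        Finset.mem_univ, true_and]
      constructor
      · rintro ⟨t, ht, a, hok, rfl⟩
        obtain ⟨hlen, hch⟩ := ih.mp ht
        refine ⟨by simp [hlen], List.isChain_cons.mpr ⟨?_, hch⟩⟩
        intro b hb
        cases t with
        | nil => simp at hb
        | cons c r =>
            simp only [List.head?_cons, Option.mem_some_iff] at hb
            subst hb
            simpa [nextOk] using hok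
      · rintro ⟨hlen, hch⟩
        cases s with
        | nil => simp at hlen
        | cons a t =>
            obtain ⟨hhd, hct⟩ := List.isChain_cons.mp hch
            refine ⟨t, ih.mpr ⟨by simpa using hlen, hct⟩, a, ?_, rfl⟩
            cases t with
            | nil => simp [nextOk]
            | cons c r => simpa [nextOk] using hhd c (by simp)

lemma card_sigF_succ (hinv : Function.Involutive bar) (hfp : ∀ a, bar a ≠ a)
    {m : ℕ} (hm : 1 ≤ m) :
    (sigF bar (m + 1)).card = (Fintype.card α - 2) * (sigF bar m).card := by
  rw [sigF, Finset.card_biUnion]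
  · rw [Finset.sum_congr rfl (g := fun _ => Fintype.card α - 2), Finset.sum_const,
      smul_eq_mul, mul_comm]
    intro t ht
    rw [Finset.card_image_of_injective _ (fun a a' h => by simpa using h)]
    obtain ⟨hlen, -⟩ := (mem_sigF bar).mp ht
    cases t with
    | nil => simp at hlen; omega
    | cons b r =>
        have key : ∀ a : α, (nextOk bar a (b :: r) = true) ↔ (a ≠ b ∧ a ≠ bar b) := by
          intro a
          simp only [nextOk, decide_eq_true_eq]
          constructor
          · rintro ⟨h1, h2⟩
            exact ⟨Ne.symm h1, fun h => h2 (by rw [h, hinv])⟩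
          · rintro ⟨h1, h2⟩
            exact ⟨Ne.symm h1, fun h => h2 (by rw [h, hinv])⟩
        have : Finset.univ.filter (fun a => nextOk bar a (b :: r)) =
            Finset.univ \ {b, bar b} := by
          ext a
          simp only [Finset.mem_filter, Finset.mem_univ, true_and, Finset.mem_sdiff,
            Finset.mem_insert, Finset.mem_singleton, key, not_or]
        rw [this, Finset.card_sdiff_of_subset (Finset.subset_univ _), Finset.card_univ]
        congr 1
        rw [Finset.card_insert_of_notMem (by simpa using (hfp b).symm),
          Finset.card_singleton]
  · intro t ht t' ht' hne
    simp only [Finset.disjoint_left]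
    rintro s hs hs'
    simp only [Finset.mem_image, Finset.mem_filter] at hs hs'
    obtain ⟨a, -, rfl⟩ := hs
    obtain ⟨a', -, h⟩ := hs'
    exact hne (by injection h with _ h2; exact h2.symm)

lemma card_sigF_one : (sigF bar 1).card = Fintype.card α := by
  have : sigF bar 1 = Finset.univ.image (fun a : α => [a]) := by
    ext s
    rw [mem_sigF]
    simp only [Finset.mem_image, Finset.mem_univ, true_and]
    constructor
    · rintro ⟨h, -⟩
      cases s with
      | nil => simp at h
      | cons a t => exact ⟨a, by simp at h; simp [h]⟩
    · rintro ⟨a, rfl⟩; simp [List.Chain']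
  rw [this, Finset.card_image_of_injective _ (fun a a' h => by simpa using h),
    Finset.card_univ]

lemma card_sigF (hinv : Function.Involutive bar) (hfp : ∀ a, bar a ≠ a) :
    ∀ {m : ℕ}, 1 ≤ m →
      (sigF bar m).card = Fintype.card α * (Fintype.card α - 2) ^ (m - 1) := by
  intro m hm
  induction m, hm using Nat.le_induction with
  | base => simpa using card_sigF_one bar
  | succ m hm ih =>
      rw [card_sigF_succ bar hinv hfp hm, ih]
      ring_nf
      rw [show 1 + m - 1 = (m - 1) + 1 by omega, pow_succ]
      ring

end Dev4

section Dev5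
set_option linter.unusedSectionVars false
variable {q : ℕ} [NeZero q] (bar : ZMod q → ZMod q)

/-- all valid signatures of length between 1 and n -/
def sigSet (n : ℕ) : Finset (List (ZMod q)) := (Finset.Icc 1 n).biUnion (sigF bar)

lemma mem_sigSet {n : ℕ} {s : List (ZMod q)} :
    s ∈ sigSet bar n ↔ (1 ≤ s.length ∧ s.length ≤ n) ∧
      List.Chain' (fun a b => b ≠ a ∧ b ≠ bar a) s := by
  simp only [sigSet, Finset.mem_biUnion, Finset.mem_Icc, mem_sigF]
  constructor
  · rintro ⟨m, ⟨h1, h2⟩, rfl, hch⟩; exact ⟨⟨h1, h2⟩, hch⟩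
  · rintro ⟨⟨h1, h2⟩, hch⟩; exact ⟨s.length, ⟨h1, h2⟩, rfl, hch⟩

lemma card_sigSet (hinv : Function.Involutive bar) (hfp : ∀ a, bar a ≠ a) (n : ℕ) :
    (sigSet bar n).card = q * ∑ j ∈ Finset.range n, (q - 2) ^ j := by
  rw [sigSet, Finset.card_biUnion]
  · have hcard : Fintype.card (ZMod q) = q := ZMod.card q
    rw [Finset.sum_congr rfl
      (g := fun m => q * (q - 2) ^ (m - 1))
      (fun m hm => by
        rw [card_sigF bar hinv hfp (Finset.mem_Icc.mp hm).1, hcard])]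
    rw [← Finset.Ico_add_one_right_eq_Icc, Finset.sum_Ico_eq_sum_range]
    simp only [Nat.add_sub_cancel, Nat.succ_sub_one, Nat.add_sub_cancel_left]
    rw [Finset.mul_sum]
  · intro m hm m' hm' hne
    simp only [Finset.disjoint_left]
    intro s hs hs'
    have h1 := ((mem_sigF bar).mp hs).1
    have h2 := ((mem_sigF bar).mp hs').1
    exact hne (h1 ▸ h2 ▸ rfl)

lemma code_card_le (hinv : Function.Involutive bar) {n : ℕ} (hn : 1 ≤ n)
    {C : Finset (List (ZMod q))} (hC : IsRCCode bar 1 n C) :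
    C.card ≤ (sigSet bar n).card := by
  refine Finset.card_le_card_of_injOn (fun c => sigW bar c) ?_ ?_
  · intro c hc
    have hlen : c.length = n := hC.1 c hc
    have hne : c ≠ [] := by
      intro h; rw [h] at hlen; simp at hlen; omega
    rw [Finset.mem_coe, mem_sigSet]
    refine ⟨⟨?_, ?_⟩, sigW_chain' bar c⟩
    · show 1 ≤ (sigW bar c).length
      have := sigW_ne_nil bar hne
      cases h : sigW bar c with
      | nil => exact absurd h this
      | cons a t => simp
    · show (sigW bar c).length ≤ n
      calc (sigW bar c).length ≤ c.length := sigW_length_le bar c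
        _ = n := hlen
  · intro c hc c' hc' hs
    by_contra hne
    have hlc : c ≠ [] := by
      intro h
      have := hC.1 c hc; rw [h] at this; simp at this; omega
    have hlc' : c' ≠ [] := by
      intro h
      have := hC.1 c' hc'; rw [h] at this; simp at this; omega
    obtain ⟨z, hz, hz'⟩ := common_descendant bar hinv hlc hlc' hs
    exact hC.2 c hc c' hc' hne z hz hz'

/-- canonical representative of a signature at length `n` -/
def repW (n : ℕ) : List (ZMod q) → List (ZMod q)
  | [] => []
  | a :: t => List.replicate (n - (a :: t).length) a ++ a :: t

lemma repW_spec (hinv : Function.Involutive bar) {n : ℕ} {s : List (ZMod q)}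
    (hs : s ∈ sigSet bar n) :
    (repW n s).length = n ∧ sigW bar (repW n s) = s := by
  obtain ⟨⟨h1, h2⟩, hch⟩ := (mem_sigSet bar).mp hs
  cases s with
  | nil => simp at h1
  | cons a t =>
      constructor
      · simp only [repW, List.length_append, List.length_replicate, List.length_cons]
        simp only [List.length_cons] at h2
        omega
      · rw [repW, sigW_replicate_cons, sigW_of_chain' bar hch]

lemma exists_code (hinv : Function.Involutive bar) {n : ℕ} (hn : 1 ≤ n) :
    ∃ C : Finset (List (ZMod q)), IsRCCode bar 1 n C ∧ C.card = (sigSet bar n).card := by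
  refine ⟨(sigSet bar n).image (repW n), ⟨?_, ?_⟩, ?_⟩
  · intro c hc
    obtain ⟨s, hs, rfl⟩ := Finset.mem_image.mp hc
    exact (repW_spec bar hinv hs).1
  · intro c hc c' hc' hne z hz hz'
    obtain ⟨s, hs, rfl⟩ := Finset.mem_image.mp hc
    obtain ⟨s', hs', rfl⟩ := Finset.mem_image.mp hc'
    have h1 : sigW bar z = s := by
      rw [sigW_of_rcderives bar hinv hz, (repW_spec bar hinv hs).2]
    have h2 : sigW bar z = s' := by
      rw [sigW_of_rcderives bar hinv hz', (repW_spec bar hinv hs').2]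
    exact hne (by rw [h1.symm.trans h2])
  · refine Finset.card_image_of_injOn ?_
    intro s hs s' hs' h
    rw [← (repW_spec bar hinv hs).2, ← (repW_spec bar hinv hs').2, h]

lemma geom_nat {r : ℕ} (hr : 1 ≤ r) (n : ℕ) :
    (r - 1) * ∑ j ∈ Finset.range n, r ^ j = r ^ n - 1 := by
  induction n with
  | zero => simp
  | succ n ih =>
      rw [Finset.sum_range_succ, Nat.mul_add, ih, pow_succ]
      have hA : 1 ≤ r ^ n := Nat.one_le_pow _ _ (by omega)
      have h1 : (r - 1) * r ^ n = r ^ n * r - r ^ n := by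
        rw [Nat.sub_mul, one_mul, mul_comm]
      have h2 : r ^ n ≤ r ^ n * r := Nat.le_mul_of_pos_right _ (by omega)
      omega

lemma formula_eq (hq4 : 4 ≤ q) (n : ℕ) :
    q * ((q - 2) ^ n - 1) / (q - 3) = q * ∑ j ∈ Finset.range n, (q - 2) ^ j := by
  have h : (q - 2) ^ n - 1 = (q - 3) * ∑ j ∈ Finset.range n, (q - 2) ^ j := by
    rw [show q - 3 = (q - 2) - 1 by omega, geom_nat (by omega) n]
  rw [h, mul_comm (q - 3), ← mul_assoc, Nat.mul_div_cancel _ (by omega)]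

lemma isGreatest_code (hq4 : 4 ≤ q) (hinv : Function.Involutive bar)
    (hfp : ∀ a, bar a ≠ a) {n : ℕ} (hn : 1 ≤ n) :
    IsGreatest {M : ℕ | ∃ C : Finset (List (ZMod q)),
      IsRCCode bar 1 n C ∧ C.card = M} (q * ((q - 2) ^ n - 1) / (q - 3)) := by
  rw [formula_eq hq4 n, ← card_sigSet bar hinv hfp n]
  constructor
  · obtain ⟨C, h1, h2⟩ := exists_code bar hinv hn
    exact ⟨C, h1, h2⟩
  · rintro M ⟨C, hC, rfl⟩
    exact code_card_le bar hinv hn hC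

end Dev5

section Dev6
set_option linter.unusedSectionVars false
variable {q : ℕ} [NeZero q] (bar : ZMod q → ZMod q)

lemma maxRC_eq (hq4 : 4 ≤ q) (hinv : Function.Involutive bar)
    (hfp : ∀ a, bar a ≠ a) {n : ℕ} (hn : 1 ≤ n) :
    maxRCCode bar 1 n = q * ((q - 2) ^ n - 1) / (q - 3) :=
  (isGreatest_code bar hq4 hinv hfp hn).csSup_eq

lemma sum_pow_le {r : ℕ} (hr : 2 ≤ r) (n : ℕ) :
    ∑ j ∈ Finset.range n, r ^ j ≤ r ^ n := by
  induction n with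
  | zero => simp
  | succ n ih =>
      rw [Finset.sum_range_succ, pow_succ]
      have h2 : r ^ n * 2 ≤ r ^ n * r := Nat.mul_le_mul_left _ hr
      omega

lemma lowN (hq4 : 4 ≤ q) {n : ℕ} (hn : 1 ≤ n) :
    (q - 2) ^ n ≤ q * ∑ j ∈ Finset.range n, (q - 2) ^ j := by
  have h1 : (q - 2) ^ (n - 1) ≤ ∑ j ∈ Finset.range n, (q - 2) ^ j :=
    Finset.single_le_sum (f := fun j => (q - 2) ^ j) (fun i _ => Nat.zero_le _)
      (Finset.mem_range.mpr (by omega))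
  calc (q - 2) ^ n = (q - 2) * (q - 2) ^ (n - 1) := by
        rw [← pow_succ']; congr 1; omega
    _ ≤ q * ∑ j ∈ Finset.range n, (q - 2) ^ j :=
        Nat.mul_le_mul (by omega) h1

lemma highN (hq4 : 4 ≤ q) (n : ℕ) :
    q * ∑ j ∈ Finset.range n, (q - 2) ^ j ≤ (q - 2) ^ (n + 2) := by
  have h1 : q ≤ (q - 2) ^ 2 := by
    have : (q - 2) * 2 ≤ (q - 2) * (q - 2) := Nat.mul_le_mul_left _ (by omega)
    rw [pow_two]
    omega
  calc q * ∑ j ∈ Finset.range n, (q - 2) ^ j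
      ≤ (q - 2) ^ 2 * (q - 2) ^ n := Nat.mul_le_mul h1 (sum_pow_le (by omega) n)
    _ = (q - 2) ^ (n + 2) := by rw [← pow_add]; ring_nf

lemma limsup_part (hq4 : 4 ≤ q) (hinv : Function.Involutive bar)
    (hfp : ∀ a, bar a ≠ a) :
    Filter.limsup (fun n : ℕ => Real.logb q (maxRCCode bar 1 n) / n)
      Filter.atTop = Real.logb q (q - 2) := by
  have hq1 : (1 : ℝ) < (q : ℝ) := by
    have : (4 : ℝ) ≤ (q : ℝ) := by exact_mod_cast hq4
    linarith
  have hcast : ((q - 2 : ℕ) : ℝ) = (q : ℝ) - 2 := by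
    have : (2 : ℕ) ≤ q := by omega
    push_cast [this]
    ring
  have hr1 : (1 : ℝ) ≤ (q : ℝ) - 2 := by
    have : (4 : ℝ) ≤ (q : ℝ) := by exact_mod_cast hq4
    linarith
  set L : ℝ := Real.logb q ((q : ℝ) - 2) with hL
  have hL0 : 0 ≤ L := Real.logb_nonneg hq1 hr1
  -- bounds on maxRCCode
  have hbound : ∀ n : ℕ, 1 ≤ n →
      (n : ℝ) * L ≤ Real.logb q (maxRCCode bar 1 n) ∧
      Real.logb q (maxRCCode bar 1 n) ≤ ((n : ℝ) + 2) * L := by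
    intro n hn
    have heq : maxRCCode bar 1 n = q * ∑ j ∈ Finset.range n, (q - 2) ^ j := by
      rw [maxRC_eq bar hq4 hinv hfp hn, formula_eq hq4 n]
    have hlow : ((q - 2 : ℕ) : ℝ) ^ n ≤ (maxRCCode bar 1 n : ℝ) := by
      rw [heq]
      exact_mod_cast lowN hq4 hn
    have hhigh : (maxRCCode bar 1 n : ℝ) ≤ ((q - 2 : ℕ) : ℝ) ^ (n + 2) := by
      rw [heq]
      exact_mod_cast highN hq4 n
    have hpowpos : (0 : ℝ) < ((q - 2 : ℕ) : ℝ) ^ n := by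
      rw [hcast]; positivity
    constructor
    · calc (n : ℝ) * L = Real.logb q (((q - 2 : ℕ) : ℝ) ^ n) := by
            rw [Real.logb_pow, hcast]
        _ ≤ Real.logb q (maxRCCode bar 1 n) :=
            Real.logb_le_logb_of_le hq1 hpowpos hlow
    · calc Real.logb q (maxRCCode bar 1 n)
          ≤ Real.logb q (((q - 2 : ℕ) : ℝ) ^ (n + 2)) :=
            Real.logb_le_logb_of_le hq1 (lt_of_lt_of_le hpowpos hlow) hhigh
        _ = ((n : ℝ) + 2) * L := by
            rw [Real.logb_pow, hcast]; push_cast; ring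
  have htend : Filter.Tendsto (fun n : ℕ => Real.logb q (maxRCCode bar 1 n) / n)
      Filter.atTop (nhds L) := by
    have hlow' : ∀ᶠ n : ℕ in Filter.atTop,
        L ≤ Real.logb q (maxRCCode bar 1 n) / n := by
      filter_upwards [Filter.eventually_ge_atTop 1] with n hn
      have hn0 : (0 : ℝ) < (n : ℝ) := by exact_mod_cast hn
      rw [le_div_iff₀ hn0, mul_comm]
      exact (hbound n hn).1
    have hhigh' : ∀ᶠ n : ℕ in Filter.atTop,
        Real.logb q (maxRCCode bar 1 n) / n ≤ L + (2 * L) / n := by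
      filter_upwards [Filter.eventually_ge_atTop 1] with n hn
      have hn0 : (0 : ℝ) < (n : ℝ) := by exact_mod_cast hn
      rw [div_le_iff₀ hn0, add_mul, div_mul_cancel₀ _ (ne_of_gt hn0), mul_comm L (n : ℝ)]
      calc Real.logb q (maxRCCode bar 1 n) ≤ ((n : ℝ) + 2) * L := (hbound n hn).2
        _ = (n : ℝ) * L + 2 * L := by ring
    have h2 : Filter.Tendsto (fun n : ℕ => L + (2 * L) / n) Filter.atTop (nhds L) := by
      have := tendsto_const_div_atTop_nhds_zero_nat (2 * L)
      have h3 := Filter.Tendsto.const_add L this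
      simpa using h3
    exact tendsto_of_tendsto_of_tendsto_of_le_of_le' tendsto_const_nhds h2 hlow' hhigh'
  have := htend.limsup_eq
  rw [this]

end Dev6

/-- For `n ≥ 1` and even `q ≥ 4`, the maximal size of a length-`n` `q`-ary code
correcting any number of length-1 reverse-complement duplications equals
`q·((q−2)^n − 1)/(q−3)`, hence the coding capacity equals `log_q (q−2)`. -/
theorem stmt7 {q : ℕ} (hq4 : 4 ≤ q) (hq : Even q) (bar : ZMod q → ZMod q)
    (hinv : Function.Involutive bar) (hfp : ∀ a, bar a ≠ a) :
    (∀ n : ℕ, 1 ≤ n →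
      IsGreatest {M : ℕ | ∃ C : Finset (List (ZMod q)),
        IsRCCode bar 1 n C ∧ C.card = M} (q * ((q - 2) ^ n - 1) / (q - 3))) ∧
    Filter.limsup (fun n : ℕ => Real.logb q (maxRCCode bar 1 n) / n)
      Filter.atTop = Real.logb q (q - 2) := by
  haveI : NeZero q := ⟨by omega⟩
  exact ⟨fun n hn => isGreatest_code bar hq4 hinv hfp hn, limsup_part bar hq4 hinv hfp⟩
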